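/- In the polynomial ring ℂ[l_1, l_2, l_3, t_{11}, t_{22}, t_{12}, t_{13}, t_{23}] (with t_{jk} = t_{kj} and t_{33} := −t_{11} − t_{22}), the four polynomials C^{(2)} := Σ_i l_i² + 2Σ_{i,k} t_{ik}², C^{(3)} := Σ_{i,k} l_it_{ik}l_k − (4/3)Σ_{i,k,l} t_{ik}t_{kl}t_{li}, C^{(2,0)} := Σ_i l_i², and C_3 := Σ_{i,k,l} t_{ik}t_{kl}t_{li} (all sums over indices from 1 to 3) are algebraically independent over ℂ. -/

import Mathlib

open MvPolynomial

/-- The eight polynomial variables: `Sum.inl i` is `l_{i+1}`; `Sum.inr 0, …, inr 4` are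
`t_{11}, t_{22}, t_{12}, t_{13}, t_{23}`. -/
abbrev ElliottVars := Fin 3 ⊕ Fin 5

/-- The angular momentum variables `l_1, l_2, l_3`. -/
noncomputable def lv (i : Fin 3) : MvPolynomial ElliottVars ℂ := X (Sum.inl i)

/-- The symmetric traceless matrix of quadrupole variables `t_{jk}` (with
`t_{33} = −t_{11} − t_{22}`). -/
noncomputable def tv : Matrix (Fin 3) (Fin 3) (MvPolynomial ElliottVars ℂ) :=
  !![X (Sum.inr 0), X (Sum.inr 2), X (Sum.inr 3);
     X (Sum.inr 2), X (Sum.inr 1), X (Sum.inr 4);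
     X (Sum.inr 3), X (Sum.inr 4), -X (Sum.inr 0) - X (Sum.inr 1)]

/-- The quadratic Casimir invariant `C^{(2)} = Σ l_i² + 2 Σ t_{ik}²` of `su(3)`. -/
noncomputable def C2e : MvPolynomial ElliottVars ℂ :=
  (∑ i, lv i ^ 2) + 2 * ∑ i, ∑ k, tv i k ^ 2

/-- The cubic Casimir invariant `C^{(3)} = Σ l_it_{ik}l_k − (4/3) Σ t_{ik}t_{kl}t_{li}`. -/
noncomputable def C3e : MvPolynomial ElliottVars ℂ :=
  (∑ i, ∑ k, lv i * tv i k * lv k)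
    - (4 / 3 : ℂ) • ∑ i, ∑ k, ∑ l, tv i k * tv k l * tv l i

/-- The Casimir invariant `C^{(2,0)} = Σ l_i²` of the `so(3)` subalgebra. -/
noncomputable def C20e : MvPolynomial ElliottVars ℂ :=
  ∑ i, lv i ^ 2

/-- The contracted cubic invariant `C_3 = Σ t_{ik}t_{kl}t_{li}`. -/
noncomputable def C3contr : MvPolynomial ElliottVars ℂ :=
  ∑ i, ∑ k, ∑ l, tv i k * tv k l * tv l i

/-! ### Auxiliary setup for the proof

We exhibit a `ℂ`-algebra homomorphism from `MvPolynomial ElliottVars ℂ` to the fraction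
field `Ω` of `ℂ[z₀,…,z₄]` under which the four invariants map to `z₀, z₁, z₄², z₃`,
which are algebraically independent.  The witness uses the "square root" `z₄` of the
value of `C^{(2,0)}`. -/

set_option maxHeartbeats 2000000
set_option synthInstance.maxHeartbeats 1000000

namespace Stmt12Aux

noncomputable abbrev P5 : Type := MvPolynomial (Fin 5) ℂ

noncomputable abbrev Om : Type := FractionRing P5

set_option synthInstance.maxHeartbeats 1000000 in
noncomputable instance instAlgCOm : Algebra ℂ Om := inferInstance

set_option synthInstance.maxHeartbeats 1000000 in
noncomputable instance instModCOm : Module ℂ Om := inferInstance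

set_option synthInstance.maxHeartbeats 1000000 in
instance instTowerOm : IsScalarTower ℂ P5 Om := inferInstance

noncomputable def z (i : Fin 5) : Om := algebraMap P5 Om (X i)

noncomputable def J : Om := algebraMap ℂ Om Complex.I

/-- The value `R = z₁ + (4/3) z₃` that `Σ lᵢ t_{ik} l_k` should take. -/
noncomputable def Rv : Om := z 1 + (4 / 3 : Om) * z 3

/-- The value `S₂ = (z₀ − z₄²)/2` that `Σ t_{ik}²` should take. -/
noncomputable def S2v : Om := (z 0 - z 4 ^ 2) / 2

/-- The witness substitution. -/
noncomputable def w : ElliottVars → Om :=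
  Sum.elim
    ![Rv / 4 * (z 4)⁻¹, -(J * Rv) / 4 * (z 4)⁻¹, z 4]
    ![z 3 / 12, -(z 3) / 12, -(J * z 3) / 12, 1 + S2v / 8, J * (1 - S2v / 8)]

lemma hz4 : z 4 ≠ 0 := by
  rw [z, map_ne_zero_iff _ (IsFractionRing.injective P5 Om)]
  exact MvPolynomial.X_ne_zero 4

lemma hu : z 4 * (z 4)⁻¹ = 1 := mul_inv_cancel₀ hz4

lemma hj : J ^ 2 = -1 := by
  rw [J, ← map_pow, Complex.I_sq, map_neg, map_one]

lemma h43 : algebraMap ℂ Om ((4 : ℂ) / 3) = (4 : Om) / 3 := by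
  rw [map_div₀, map_ofNat, map_ofNat]

end Stmt12Aux

set_option maxHeartbeats 4000000 in
set_option synthInstance.maxHeartbeats 1000000 in
open Stmt12Aux in
/-- The polynomials `C^{(2)}`, `C^{(3)}`, `C^{(2,0)}` and `C_3` of the
Elliott chain `su(3) ⊃ so(3)` are algebraically independent over `ℂ`. -/
theorem stmt12 : AlgebraicIndependent ℂ ![C2e, C3e, C20e, C3contr] := by
  have hukey := Stmt12Aux.hu
  have hjkey := Stmt12Aux.hj
  -- the four key identities
  have key2 : aeval w C20e = z 4 ^ 2 := by
    simp only [C20e, lv, Fin.sum_univ_three, map_add, map_pow, aeval_X, w, Sum.elim_inl,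
      Matrix.cons_val_zero, Matrix.cons_val_one, Matrix.cons_val_two, Matrix.head_cons,
      Matrix.tail_cons, Rv]
    linear_combination (((1:Om)/9)*(z 3)^2*((z 4)⁻¹)^2 + ((1:Om)/6)*(z 1)*(z 3)*((z 4)⁻¹)^2
      + ((1:Om)/16)*(z 1)^2*((z 4)⁻¹)^2) * hjkey
  have key0 : aeval w C2e = z 0 := by
    simp only [C2e, lv, tv, Fin.sum_univ_three, map_add, map_mul, map_pow, map_sub, map_neg,
      map_ofNat, aeval_X, w, Sum.elim_inl, Sum.elim_inr,
      Matrix.cons_val', Matrix.empty_val', Matrix.cons_val_fin_one, Matrix.of_apply,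
      Matrix.cons_val_zero, Matrix.cons_val_one, Matrix.cons_val_two, Matrix.cons_val_three,
      Matrix.cons_val_four, Matrix.head_cons, Matrix.tail_cons, Matrix.head_fin_const,
      Rv, S2v]
    linear_combination ((4:Om) + ((1:Om)/2)*(z 4)^2 + ((1:Om)/64)*(z 4)^4 + ((1:Om)/36)*(z 3)^2
      + ((1:Om)/9)*(z 3)^2*((z 4)⁻¹)^2 + ((1:Om)/6)*(z 1)*(z 3)*((z 4)⁻¹)^2
      + ((1:Om)/16)*(z 1)^2*((z 4)⁻¹)^2 + (-(1:Om)/2)*(z 0) + (-(1:Om)/32)*(z 0)*(z 4)^2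
      + ((1:Om)/64)*(z 0)^2) * hjkey
  have key3 : aeval w C3contr = z 3 := by
    simp only [C3contr, tv, Fin.sum_univ_three, map_add, map_mul, map_sub, map_neg, aeval_X,
      w, Sum.elim_inr,
      Matrix.cons_val', Matrix.empty_val', Matrix.cons_val_fin_one, Matrix.of_apply,
      Matrix.cons_val_zero, Matrix.cons_val_one, Matrix.cons_val_two, Matrix.cons_val_three,
      Matrix.cons_val_four, Matrix.head_cons, Matrix.tail_cons, Matrix.head_fin_const,
      S2v]
    linear_combination ((-(3:Om)/4)*(z 3) + (-(1:Om)/32)*(z 3)*(z 4)^2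
      + ((1:Om)/1024)*(z 3)*(z 4)^4 + ((1:Om)/32)*(z 0)*(z 3)
      + (-(1:Om)/512)*(z 0)*(z 3)*(z 4)^2 + ((1:Om)/1024)*(z 0)^2*(z 3)) * hjkey
  have key1 : aeval w C3e = z 1 := by
    simp only [C3e, lv, tv, Fin.sum_univ_three, map_add, map_mul, map_sub, map_neg, map_smul,
      aeval_X, w, Sum.elim_inl, Sum.elim_inr,
      Matrix.cons_val', Matrix.empty_val', Matrix.cons_val_fin_one, Matrix.of_apply,
      Matrix.cons_val_zero, Matrix.cons_val_one, Matrix.cons_val_two, Matrix.cons_val_three,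
      Matrix.cons_val_four, Matrix.head_cons, Matrix.tail_cons, Matrix.head_fin_const,
      Algebra.smul_def, AlgHom.commutes, h43, Rv, S2v]
    linear_combination ((1:Om)*(z 3) + (-(2:Om)/3)*(z 3)*(z 4)*((z 4)⁻¹)
      + ((1:Om)/24)*(z 3)*(z 4)^2 + (-(1:Om)/24)*(z 3)*(z 4)^3*((z 4)⁻¹)
      + (-(1:Om)/768)*(z 3)*(z 4)^4 + ((1:Om)/108)*(z 3)^3*((z 4)⁻¹)^2
      + (-(1:Om)/2)*(z 1)*(z 4)*((z 4)⁻¹) + (-(1:Om)/32)*(z 1)*(z 4)^3*((z 4)⁻¹)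
      + ((1:Om)/72)*(z 1)*(z 3)^2*((z 4)⁻¹)^2 + ((1:Om)/192)*(z 1)^2*(z 3)*((z 4)⁻¹)^2
      + (-(1:Om)/24)*(z 0)*(z 3) + ((1:Om)/24)*(z 0)*(z 3)*(z 4)*((z 4)⁻¹)
      + ((1:Om)/384)*(z 0)*(z 3)*(z 4)^2 + ((1:Om)/32)*(z 0)*(z 1)*(z 4)*((z 4)⁻¹)
      + (-(1:Om)/768)*(z 0)^2*(z 3)) * hjkey
      + (((4:Om)/3)*(z 3) + (z 1)) * hukey
  -- independence of the image family
  have hidx : Function.Injective (![0, 1, 4, 3] : Fin 4 → Fin 5) := by decide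
  have hX : AlgebraicIndependent ℂ
      ((X : Fin 5 → P5) ∘ (![0, 1, 4, 3] : Fin 4 → Fin 5)) :=
    (MvPolynomial.algebraicIndependent_X (Fin 5) ℂ).comp _ hidx
  have htr : ∀ i : Fin 4, Transcendental ℂ
      ((![Polynomial.X, Polynomial.X, Polynomial.X ^ 2, Polynomial.X] :
        Fin 4 → Polynomial ℂ) i) := by
    intro i
    have h1 : (1 : ℂ) ∈ nonZeroDivisors ℂ := Submonoid.one_mem _
    fin_cases i <;>
      exact Polynomial.transcendental _
        (by simp [Matrix.cons_val_two, Matrix.cons_val_three, Matrix.tail_cons,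
          Matrix.head_cons])
        (by simpa [Matrix.cons_val_two, Matrix.cons_val_three, Matrix.tail_cons,
          Matrix.head_cons, Polynomial.leadingCoeff_X_pow] using h1)
  have hbase := hX.polynomial_aeval_of_transcendental htr
  have hfam : (fun i : Fin 4 => Polynomial.aeval
        (((X : Fin 5 → P5) ∘ (![0, 1, 4, 3] : Fin 4 → Fin 5)) i)
        ((![Polynomial.X, Polynomial.X, Polynomial.X ^ 2, Polynomial.X] :
          Fin 4 → Polynomial ℂ) i))
      = ![X 0, X 1, (X 4 : P5) ^ 2, X 3] := by
    funext i
    fin_cases i <;> simp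
  rw [hfam] at hbase
  have hOm : AlgebraicIndependent ℂ
      (⇑(IsScalarTower.toAlgHom ℂ P5 Om) ∘ ![X 0, X 1, (X 4 : P5) ^ 2, X 3]) := by
    refine hbase.map' ?_
    rw [IsScalarTower.coe_toAlgHom']
    exact IsFractionRing.injective P5 Om
  refine AlgebraicIndependent.of_comp (MvPolynomial.aeval w) ?_
  have hcomp : ⇑(MvPolynomial.aeval w) ∘ ![C2e, C3e, C20e, C3contr]
      = ⇑(IsScalarTower.toAlgHom ℂ P5 Om) ∘ ![X 0, X 1, (X 4 : P5) ^ 2, X 3] := by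
    funext i
    fin_cases i
    · simpa [IsScalarTower.coe_toAlgHom', z] using key0
    · simpa [IsScalarTower.coe_toAlgHom', z] using key1
    · simpa [Matrix.cons_val_two, Matrix.tail_cons, Matrix.head_cons,
        IsScalarTower.coe_toAlgHom', map_pow, z] using key2
    · simpa [Matrix.cons_val_three, Matrix.tail_cons, Matrix.head_cons,
        IsScalarTower.coe_toAlgHom', z] using key3
  rw [hcomp]
  exact hOm
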